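/- Let W = W₁ ⊕ W₂ be an orthogonal direct sum of symplectic spaces and let g = g₁ ⊕ g₂ ∈ Sp(W) with gᵢ ∈ Sp(Wᵢ). Then (g-1)W = (g₁-1)W₁ ⊕ (g₂-1)W₂, and det((J_g)|_{J_gW}) = det((J_{g₁})|_{J_{g₁}W₁}) · det((J_{g₂})|_{J_{g₂}W₂}), where J = J₁ ⊕ J₂ is a compatible positive complex structure preserving both W₁ and W₂ and J_g = J⁻¹(g-1). -/

import Mathlib

section Aux

variable {M N : Type*} [AddCommGroup M] [Module ℝ M] [AddCommGroup N] [Module ℝ N]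

lemma aux_range_prodMap {M' N' : Type*} [AddCommGroup M'] [Module ℝ M']
    [AddCommGroup N'] [Module ℝ N'] (f : M →ₗ[ℝ] M') (g : N →ₗ[ℝ] N') :
    LinearMap.range (f.prodMap g) = (LinearMap.range f).prod (LinearMap.range g) := by
  ext ⟨x, y⟩
  constructor
  · rintro ⟨⟨a, b⟩, hab⟩
    rw [← hab]
    exact ⟨⟨a, rfl⟩, ⟨b, rfl⟩⟩
  · rintro ⟨⟨a, ha⟩, ⟨b, hb⟩⟩
    exact ⟨(a, b), by simp [ha, hb]⟩

lemma aux_det_restrict_congr (f : M →ₗ[ℝ] M) {p p' : Submodule ℝ M} (hpp : p = p')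
    (h : ∀ x ∈ p, f x ∈ p) (h' : ∀ x ∈ p', f x ∈ p') :
    LinearMap.det (f.restrict h) = LinearMap.det (f.restrict h') := by
  subst hpp; rfl

lemma aux_det_prodMap [FiniteDimensional ℝ M] [FiniteDimensional ℝ N]
    (f : M →ₗ[ℝ] M) (g : N →ₗ[ℝ] N) :
    LinearMap.det (f.prodMap g) = LinearMap.det f * LinearMap.det g := by
  classical
  let b := Module.finBasis ℝ M
  let c := Module.finBasis ℝ N
  rw [← LinearMap.det_toMatrix (b.prod c), LinearMap.toMatrix_prodMap,
    Matrix.det_fromBlocks_zero₂₁, LinearMap.det_toMatrix, LinearMap.det_toMatrix]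

/-- The equivalence between `↥(p.prod q)` and `↥p × ↥q`. -/
def auxProdEquiv (p : Submodule ℝ M) (q : Submodule ℝ N) :
    (p.prod q : Submodule ℝ (M × N)) ≃ₗ[ℝ] p × q where
  toFun x := (⟨x.1.1, x.2.1⟩, ⟨x.1.2, x.2.2⟩)
  invFun y := ⟨(y.1.1, y.2.1), ⟨y.1.2, y.2.2⟩⟩
  map_add' _ _ := rfl
  map_smul' _ _ := rfl
  left_inv _ := rfl
  right_inv _ := rfl

lemma aux_det_restrict_prodMap [FiniteDimensional ℝ M] [FiniteDimensional ℝ N]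
    (f : M →ₗ[ℝ] M) (g : N →ₗ[ℝ] N) (p : Submodule ℝ M) (q : Submodule ℝ N)
    (hf : ∀ x ∈ p, f x ∈ p) (hg : ∀ x ∈ q, g x ∈ q)
    (h : ∀ x ∈ p.prod q, (f.prodMap g) x ∈ p.prod q) :
    LinearMap.det ((f.prodMap g).restrict h) =
      LinearMap.det (f.restrict hf) * LinearMap.det (g.restrict hg) := by
  have key : (f.prodMap g).restrict h =
      ((auxProdEquiv p q).symm : (p × q) →ₗ[ℝ] _) ∘ₗ
        ((f.restrict hf).prodMap (g.restrict hg)) ∘ₗ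
        ((auxProdEquiv p q) : _ →ₗ[ℝ] (p × q)) := rfl
  rw [key]
  have := LinearMap.det_conj ((f.restrict hf).prodMap (g.restrict hg))
      (auxProdEquiv p q).symm
  rw [LinearEquiv.symm_symm] at this
  rw [this, aux_det_prodMap]

end Aux



/-- for `g = g₁ ⊕ g₂` on `W = W₁ ⊕ W₂` and `J = J₁ ⊕ J₂` a compatible positive
complex structure preserving the summands, `(g-1)W = (g₁-1)W₁ ⊕ (g₂-1)W₂` and the
determinant of `J_g` restricted to its image is the product of those of `J_{g₁}`, `J_{g₂}`. -/
theorem stmt13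
    (W₁ W₂ : Type*) [AddCommGroup W₁] [Module ℝ W₁] [FiniteDimensional ℝ W₁]
    [AddCommGroup W₂] [Module ℝ W₂] [FiniteDimensional ℝ W₂]
    (Ω₁ : W₁ →ₗ[ℝ] W₁ →ₗ[ℝ] ℝ) (Ω₂ : W₂ →ₗ[ℝ] W₂ →ₗ[ℝ] ℝ)
    (halt₁ : ∀ w, Ω₁ w w = 0) (hnd₁ : ∀ w, (∀ v, Ω₁ w v = 0) → w = 0)
    (halt₂ : ∀ w, Ω₂ w w = 0) (hnd₂ : ∀ w, (∀ v, Ω₂ w v = 0) → w = 0)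
    (J₁ : W₁ ≃ₗ[ℝ] W₁) (J₂ : W₂ ≃ₗ[ℝ] W₂)
    (hJ₁sp : ∀ u v, Ω₁ (J₁ u) (J₁ v) = Ω₁ u v) (hJ₁2 : ∀ w, J₁ (J₁ w) = -w)
    (hJ₁pos : ∀ w, w ≠ 0 → 0 < Ω₁ (J₁ w) w)
    (hJ₂sp : ∀ u v, Ω₂ (J₂ u) (J₂ v) = Ω₂ u v) (hJ₂2 : ∀ w, J₂ (J₂ w) = -w)
    (hJ₂pos : ∀ w, w ≠ 0 → 0 < Ω₂ (J₂ w) w)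
    (g₁ : W₁ ≃ₗ[ℝ] W₁) (hg₁ : ∀ u v, Ω₁ (g₁ u) (g₁ v) = Ω₁ u v)
    (g₂ : W₂ ≃ₗ[ℝ] W₂) (hg₂ : ∀ u v, Ω₂ (g₂ u) (g₂ v) = Ω₂ u v)
    (Jg : (W₁ × W₂) →ₗ[ℝ] (W₁ × W₂)) (Jg₁ : W₁ →ₗ[ℝ] W₁) (Jg₂ : W₂ →ₗ[ℝ] W₂)
    (hJg : Jg = (J₁.prodCongr J₂).symm.toLinearMap ∘ₗ ((g₁.prodCongr g₂).toLinearMap - LinearMap.id))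
    (hJg₁ : Jg₁ = J₁.symm.toLinearMap ∘ₗ (g₁.toLinearMap - LinearMap.id))
    (hJg₂ : Jg₂ = J₂.symm.toLinearMap ∘ₗ (g₂.toLinearMap - LinearMap.id)) :
    LinearMap.range ((g₁.prodCongr g₂).toLinearMap - LinearMap.id) =
      (LinearMap.range (g₁.toLinearMap - LinearMap.id)).prod
        (LinearMap.range (g₂.toLinearMap - LinearMap.id)) ∧
    LinearMap.det (Jg.restrict
        (p := LinearMap.range Jg) (q := LinearMap.range Jg)
        (fun x _ => LinearMap.mem_range_self Jg x)) =
      LinearMap.det (Jg₁.restrict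
        (p := LinearMap.range Jg₁) (q := LinearMap.range Jg₁)
        (fun x _ => LinearMap.mem_range_self Jg₁ x)) *
      LinearMap.det (Jg₂.restrict
        (p := LinearMap.range Jg₂) (q := LinearMap.range Jg₂)
        (fun x _ => LinearMap.mem_range_self Jg₂ x)) := by
  subst hJg hJg₁ hJg₂
  set F₁ : W₁ →ₗ[ℝ] W₁ := J₁.symm.toLinearMap ∘ₗ (g₁.toLinearMap - LinearMap.id) with hF₁
  set F₂ : W₂ →ₗ[ℝ] W₂ := J₂.symm.toLinearMap ∘ₗ (g₂.toLinearMap - LinearMap.id) with hF₂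
  have hD : (g₁.prodCongr g₂).toLinearMap - LinearMap.id =
      (g₁.toLinearMap - LinearMap.id).prodMap (g₂.toLinearMap - LinearMap.id) := by
    ext x <;> rfl
  have hJE : (J₁.prodCongr J₂).symm.toLinearMap ∘ₗ ((g₁.prodCongr g₂).toLinearMap - LinearMap.id) =
      F₁.prodMap F₂ := by
    ext x <;> rfl
  constructor
  · rw [hD, aux_range_prodMap]
  · rw [hJE]
    have h2 : ∀ x ∈ (LinearMap.range F₁).prod (LinearMap.range F₂),
        (F₁.prodMap F₂) x ∈ (LinearMap.range F₁).prod (LinearMap.range F₂) := by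
      intro x hx
      rw [← aux_range_prodMap]
      exact LinearMap.mem_range_self _ x
    rw [aux_det_restrict_congr _ (aux_range_prodMap F₁ F₂) _ h2,
      aux_det_restrict_prodMap F₁ F₂ _ _ (fun x _ => LinearMap.mem_range_self _ x)
        (fun x _ => LinearMap.mem_range_self _ x) h2]
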